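/- gss is invariant under environment extension: if sce and sce' are SCEs with sce' extending sce (sce ⊆ sce' as finite maps), every generic signature name occurring in constructors of sce is well-formed in sce, no naked type variable occurs among supersignatures of constructors of sce, all type variables used in constructors of sce are declared in their type-variables components, and ggnm is a ground signature name well-formed in sce, then gss(sce', ggnm) = gss(sce, ggnm). -/

import Mathlib

/-- Type names: either a type variable (from `X`) or a generic signature name,
i.e. a signature constructor name (from `N`) applied to a list of type names. -/
inductive TName (N X : Type) : Type
  | var : X → TName N X
  | gen : N → List (TName N X) → TName N X

/-- Occurrence of the type variable `y` in a type name. -/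
inductive Occurs {N X : Type} (y : X) : TName N X → Prop
  | var : Occurs y (TName.var y)
  | arg {nm : N} {args : List (TName N X)} {t : TName N X} :
      t ∈ args → Occurs y t → Occurs y (TName.gen nm args)

/-- Ground signature names: generic signature names containing no type variables. -/
inductive IsGround {N X : Type} : TName N X → Prop
  | gen {nm : N} {args : List (TName N X)} :
      (∀ t ∈ args, IsGround t) → IsGround (TName.gen nm args)

/-- Occurrence of the signature constructor name `n` (as the head of some
generic signature name) inside a type name. -/
inductive NameOccurs {N X : Type} (n : N) : TName N X → Prop
  | head {args : List (TName N X)} : NameOccurs n (TName.gen n args)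
  | arg {nm : N} {args : List (TName N X)} {t : TName N X} :
      t ∈ args → NameOccurs n t → NameOccurs n (TName.gen nm args)

/-- The outermost name (head) of a type name, if any. -/
def TName.head? {N X : Type} : TName N X → Option N
  | .var _ => none
  | .gen nm _ => some nm

/-- Name substitution `{V̄ ↦ TN̄}`: a type variable in `V` is mapped to the
element of `TN` at the corresponding position, other variables are left
unchanged, and substitution acts homomorphically on generic signature names. -/
def substT {N X : Type} [DecidableEq X] (V : List X) (TN : List (TName N X)) :
    TName N X → TName N X
  | .var y =>
      match (V.zip TN).lookup y with
      | some t => t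
      | none => .var y
  | .gen nm args => .gen nm (args.attach.map fun t => substT V TN t.1)
decreasing_by
  simp_wf
  have := List.sizeOf_lt_of_mem t.2
  omega

/-- A signature constructor: a name, a list of (distinct) type variables,
supersignatures, field signatures and method signatures. -/
structure SigCon (N X L : Type) where
  name : N
  tvars : List X
  supers : List (TName N X)
  fields : List (L × TName N X)
  methods : List (L × List (TName N X) × TName N X)

/-- A signature constructor environment: a (finite) map from names to
signature constructors. -/
abbrev SCE (N X L : Type) := N → Option (SigCon N X L)

/-- Well-formedness of a type name in an SCE: each signature constructor name
used is bound in the environment and applied to the declared number of type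
arguments, recursively. -/
inductive WFT {N X L : Type} (sce : SCE N X L) : TName N X → Prop
  | var (y : X) : WFT sce (TName.var y)
  | gen {nm : N} {args : List (TName N X)} (sc : SigCon N X L) :
      sce nm = some sc → args.length = sc.tvars.length →
      (∀ t ∈ args, WFT sce t) → WFT sce (TName.gen nm args)

/-- The type variable `y` occurs somewhere in the signature constructor `sc`. -/
def OccursInSC {N X L : Type} (y : X) (sc : SigCon N X L) : Prop :=
  (∃ s ∈ sc.supers, Occurs y s) ∨ (∃ f ∈ sc.fields, Occurs y f.2) ∨
    (∃ m ∈ sc.methods, (∃ a ∈ m.2.1, Occurs y a) ∨ Occurs y m.2.2)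

/-- The signature constructor name `n` is referenced somewhere inside `sc`. -/
def NameInSC {N X L : Type} (n : N) (sc : SigCon N X L) : Prop :=
  (∃ s ∈ sc.supers, NameOccurs n s) ∨ (∃ f ∈ sc.fields, NameOccurs n f.2) ∨
    (∃ m ∈ sc.methods, (∃ a ∈ m.2.1, NameOccurs n a) ∨ NameOccurs n m.2.2)

/-- All type names occurring in the components of `sc` are well-formed in `sce`. -/
def WFSC {N X L : Type} (sce : SCE N X L) (sc : SigCon N X L) : Prop :=
  (∀ s ∈ sc.supers, WFT sce s) ∧ (∀ f ∈ sc.fields, WFT sce f.2) ∧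
    (∀ m ∈ sc.methods, (∀ a ∈ m.2.1, WFT sce a) ∧ WFT sce m.2.2)

/-- The "direct supersignature" relation on names induced by an SCE:
`SuperRel sce n m` iff `m` is the head of one of the supersignatures of the
constructor bound to `n`. -/
def SuperRel {N X L : Type} (sce : SCE N X L) (n m : N) : Prop :=
  ∃ sc, sce n = some sc ∧ ∃ s ∈ sc.supers, s.head? = some m

/-- Every member (field or method) a constructor shares (same label) with an
instantiation of one of its supersignature constructors has exactly the same
signature as in that instantiation. -/
def MemberMatch {N X L : Type} [DecidableEq X] (sce : SCE N X L) : Prop :=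
  ∀ n sc, sce n = some sc →
    ∀ (snm : N) (sargs : List (TName N X)), TName.gen snm sargs ∈ sc.supers →
      ∀ ssc, sce snm = some ssc →
        (∀ (l : L) (t t' : TName N X), (l, t) ∈ sc.fields → (l, t') ∈ ssc.fields →
          t = substT ssc.tvars sargs t') ∧
        (∀ (l : L) (as_ : List (TName N X)) (r : TName N X)
            (as' : List (TName N X)) (r' : TName N X),
          (l, as_, r) ∈ sc.methods → (l, as', r') ∈ ssc.methods →
          as_ = as'.map (substT ssc.tvars sargs) ∧ r = substT ssc.tvars sargs r')

/-- Well-formedness of a signature constructor environment. -/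
structure WFSCE {N X L : Type} [DecidableEq X] (sce : SCE N X L) : Prop where
  finite : Set.Finite {n | (sce n).isSome}
  namesMatch : ∀ n sc, sce n = some sc → sc.name = n
  tvarsNodup : ∀ n sc, sce n = some sc → sc.tvars.Nodup
  refsClosed : ∀ n sc, sce n = some sc → ∀ m, NameInSC m sc → (sce m).isSome
  wfNames : ∀ n sc, sce n = some sc → WFSC sce sc
  tvarsDecl : ∀ n sc, sce n = some sc → ∀ y, OccursInSC y sc → y ∈ sc.tvars
  noNakedSuper : ∀ n sc, sce n = some sc → ∀ s ∈ sc.supers, ∀ y : X, s ≠ TName.var y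
  acyclic : ∀ n, ¬ Relation.TransGen (SuperRel sce) n n
  memberMatch : MemberMatch sce

/-- `s` is a direct ground supersignature name of `g` in `sce`. -/
def DirectSuper {N X L : Type} [DecidableEq X] (sce : SCE N X L)
    (g s : TName N X) : Prop :=
  ∃ (nm : N) (args : List (TName N X)) (sc : SigCon N X L),
    g = TName.gen nm args ∧ sce nm = some sc ∧
      ∃ t ∈ sc.supers, s = substT sc.tvars args t

/-- `gss sce g`: the set of all ground supersignature names of `g`, obtained by
transitively taking direct ground supersignature names. -/
def gss {N X L : Type} [DecidableEq X] (sce : SCE N X L) (g : TName N X) :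
    Set (TName N X) :=
  {s | Relation.TransGen (DirectSuper sce) g s}

/-- `SCEExt sce' sce`: the environment `sce'` extends `sce` (as finite maps). -/
def SCEExt {N X L : Type} (sce' sce : SCE N X L) : Prop :=
  ∀ n sc, sce n = some sc → sce' n = some sc

/-- Subsigning of generic object signatures: `Subsign gos2 gos1` (gos2 ⊴ gos1). -/
def Subsign {N X L : Type} [DecidableEq X]
    (gos2 gos1 : TName N X × SCE N X L) : Prop :=
  SCEExt gos2.2 gos1.2 ∧ (gos2.1 = gos1.1 ∨ gos1.1 ∈ gss gos2.2 gos2.1)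

/-- A well-formed generic object signature: a ground signature name
well-formed in a well-formed SCE. -/
def WFGOS {N X L : Type} [DecidableEq X] (gos : TName N X × SCE N X L) : Prop :=
  WFSCE gos.2 ∧ WFT gos.2 gos.1 ∧ IsGround gos.1

/-- A (candidate) ground signature: a quadruple of a name, supersignature
names, field signatures and method signatures (type-name components). -/
structure GSig (N X L : Type) where
  name : TName N X
  supers : List (TName N X)
  fields : List (L × TName N X)
  methods : List (L × List (TName N X) × TName N X)

/-- `gs` is a ground signature: all its components are ground signature names. -/
def GSig.IsGroundSig {N X L : Type} (gs : GSig N X L) : Prop :=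
  IsGround gs.name ∧ (∀ s ∈ gs.supers, IsGround s) ∧
    (∀ f ∈ gs.fields, IsGround f.2) ∧
    (∀ m ∈ gs.methods, (∀ a ∈ m.2.1, IsGround a) ∧ IsGround m.2.2)

/-- `GenToGnd`: instantiating the signature constructor `sc` with the type
arguments `args`, taking `(nm, args)` as the name of the result. -/
def genToGnd {N X L : Type} [DecidableEq X] (nm : N) (args : List (TName N X))
    (sc : SigCon N X L) : GSig N X L where
  name := TName.gen nm args
  supers := sc.supers.map (substT sc.tvars args)
  fields := sc.fields.map fun f => (f.1, substT sc.tvars args f.2)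
  methods := sc.methods.map fun m =>
    (m.1, m.2.1.map (substT sc.tvars args), substT sc.tvars args m.2.2)

/-- The inductively defined set `GGN = N × GGN*` of ground signature names. -/
inductive GGN (N : Type) : Type
  | node : N → List (GGN N) → GGN N

/-- The canonical interpretation of a ground signature name as a generic
signature name. -/
def GGN.toTName {N X : Type} : GGN N → TName N X
  | .node nm args => TName.gen nm (args.attach.map fun a => a.1.toTName)
decreasing_by
  simp_wf
  have := List.sizeOf_lt_of_mem a.2
  omega

/-- The outermost name of a ground signature name (its erasure). -/
def GGN.headName {N : Type} : GGN N → N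
  | .node nm _ => nm

/-- A (non-generic) NOOP signature. -/
structure NSig (N L : Type) where
  name : N
  supers : List N
  fields : List (L × N)
  methods : List (L × List N × N)

/-- A NOOP signature environment. -/
abbrev NEnv (N L : Type) := N → Option (NSig N L)

/-- The name `m` is referenced inside the NOOP signature `s`. -/
def NameInNSig {N L : Type} (m : N) (s : NSig N L) : Prop :=
  m ∈ s.supers ∨ (∃ f ∈ s.fields, f.2 = m) ∨
    (∃ mm ∈ s.methods, m ∈ mm.2.1 ∨ mm.2.2 = m)

/-- The direct supersignature relation on names induced by a NOOP environment. -/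
def NSuperRel {N L : Type} (env : NEnv N L) (n m : N) : Prop :=
  ∃ s, env n = some s ∧ m ∈ s.supers

/-- Well-formedness of a NOOP signature environment. -/
structure WFNEnv {N L : Type} (env : NEnv N L) : Prop where
  finite : Set.Finite {n | (env n).isSome}
  namesMatch : ∀ n s, env n = some s → s.name = n
  refsClosed : ∀ n s, env n = some s → ∀ m, NameInNSig m s → (env m).isSome
  acyclic : ∀ n, ¬ Relation.TransGen (NSuperRel env) n n
  memberMatch : ∀ n s, env n = some s → ∀ m ∈ s.supers, ∀ ss, env m = some ss →
    (∀ (l : L) (t t' : N), (l, t) ∈ s.fields → (l, t') ∈ ss.fields → t = t') ∧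
    (∀ (l : L) (as_ : List N) (r : N) (as' : List N) (r' : N),
      (l, as_, r) ∈ s.methods → (l, as', r') ∈ ss.methods → as_ = as' ∧ r = r')

/-- Erasure of a type name: a naked type variable erases to `Object`, a generic
signature name erases to its outermost name. -/
def eraseT {N X : Type} (Object : N) : TName N X → N
  | .var _ => Object
  | .gen nm _ => nm

/-- Erasure of a signature constructor to a NOOP signature. -/
def eraseSC {N X L : Type} (Object : N) (sc : SigCon N X L) : NSig N L where
  name := sc.name
  supers := sc.supers.map (eraseT Object)
  fields := sc.fields.map fun f => (f.1, eraseT Object f.2)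
  methods := sc.methods.map fun m =>
    (m.1, m.2.1.map (eraseT Object), eraseT Object m.2.2)

/-- Erasure of a signature constructor environment. -/
def eraseSCE {N X L : Type} (Object : N) (sce : SCE N X L) : NEnv N L :=
  fun n => (sce n).map (eraseSC Object)


lemma lookup_zip_mem {N X : Type} [DecidableEq X] :
    ∀ (V : List X) (TN : List (TName N X)), V.length = TN.length →
      ∀ y ∈ V, ∃ u ∈ TN, (V.zip TN).lookup y = some u := by
  intro V
  induction V with
  | nil => intro TN _ y hy; simp at hy
  | cons v V ih =>
    intro TN hlen y hy
    cases TN with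
    | nil => simp at hlen
    | cons u TN =>
      simp only [List.zip_cons_cons, List.lookup]
      by_cases h : y = v
      · subst h; simp
      · have hbeq : (y == v) = false := by simp [h]
        rw [hbeq]
        simp only [List.mem_cons] at hy
        rcases hy with h' | hy
        · exact absurd h' h
        · obtain ⟨u', hu', hl⟩ := ih TN (by simpa using hlen) y hy
          exact ⟨u', List.mem_cons_of_mem _ hu', hl⟩

lemma substT_inv {N X L : Type} [DecidableEq X] (sce : SCE N X L)
    (V : List X) (TN : List (TName N X)) (hlen : V.length = TN.length)
    (hTN : ∀ u ∈ TN, IsGround u ∧ WFT sce u) :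
    ∀ t, WFT sce t → (∀ y, Occurs y t → y ∈ V) →
      IsGround (substT V TN t) ∧ WFT sce (substT V TN t) := by
  intro t hwft
  induction hwft with
  | var y =>
    intro hocc
    have hy : y ∈ V := hocc y Occurs.var
    obtain ⟨u, hu, hl⟩ := lookup_zip_mem V TN hlen y hy
    have : substT V TN (TName.var y) = u := by
      rw [substT]; rw [hl]
    rw [this]
    exact hTN u hu
  | @gen nm args sc hsc hlen' hall ih =>
    intro hocc
    have hsub : substT V TN (TName.gen nm args) =
        TName.gen nm (args.attach.map fun t => substT V TN t.1) := by
      rw [substT]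
    rw [hsub]
    have hmem : ∀ s ∈ args.attach.map (fun t => substT V TN t.1),
        IsGround s ∧ WFT sce s := by
      intro s hs
      simp only [List.mem_map, List.mem_attach, true_and, Subtype.exists] at hs
      obtain ⟨a, ha, rfl⟩ := hs
      exact ih a ha (fun y hy => hocc y (Occurs.arg ha hy))
    constructor
    · exact IsGround.gen (fun s hs => (hmem s hs).1)
    · exact WFT.gen sc hsc (by simpa using hlen') (fun s hs => (hmem s hs).2)

lemma directSuper_step {N X L : Type} [DecidableEq X]
    (sce sce' : SCE N X L) (hext : SCEExt sce' sce)
    (hwfn : ∀ n sc, sce n = some sc → WFSC sce sc)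
    (htv : ∀ n sc, sce n = some sc → ∀ y : X, OccursInSC y sc → y ∈ sc.tvars)
    (g s : TName N X) (hgr : IsGround g) (hwf : WFT sce g)
    (h : DirectSuper sce' g s) :
    DirectSuper sce g s ∧ IsGround s ∧ WFT sce s := by
  obtain ⟨nm, args, sc, rfl, hsc', t, ht, rfl⟩ := h
  cases hwf with
  | gen sc0 hsc0 hlen0 hargswf =>
    have hsc0' := hext _ _ hsc0
    rw [hsc0'] at hsc'
    injection hsc' with hsceq
    subst hsceq
    have hargsgr : ∀ a ∈ args, IsGround a := by
      cases hgr with | gen h => exact h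
    have hInvArgs : ∀ u ∈ args, IsGround u ∧ WFT sce u :=
      fun u hu => ⟨hargsgr u hu, hargswf u hu⟩
    have hwft : WFT sce t := (hwfn nm sc0 hsc0).1 t ht
    have hvars : ∀ y, Occurs y t → y ∈ sc0.tvars := fun y hy =>
      htv nm sc0 hsc0 y (Or.inl ⟨t, ht, hy⟩)
    have hres := substT_inv sce sc0.tvars args hlen0.symm hInvArgs t hwft hvars
    exact ⟨⟨nm, args, sc0, rfl, hsc0, t, ht, rfl⟩, hres⟩

/-- `gss` is invariant under environment extension: if `sce'`
extends `sce`, all generic signature names occurring in constructors of `sce`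
are well-formed in `sce`, no naked type variable occurs among supersignatures,
all occurring type variables are declared, and `ggnm` is a ground signature
name well-formed in `sce`, then `gss(sce', ggnm) = gss(sce, ggnm)`. -/
theorem gss_invariant_under_extension {N X L : Type} [DecidableEq X]
    (sce sce' : SCE N X L) (hext : SCEExt sce' sce)
    (hwfn : ∀ n sc, sce n = some sc → WFSC sce sc)
    (hnk : ∀ n sc, sce n = some sc → ∀ s ∈ sc.supers, ∀ y : X, s ≠ TName.var y)
    (htv : ∀ n sc, sce n = some sc → ∀ y : X, OccursInSC y sc → y ∈ sc.tvars)
    (ggnm : TName N X) (hgr : IsGround ggnm) (hwf : WFT sce ggnm) :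
    gss sce' ggnm = gss sce ggnm := by
  ext s
  simp only [gss, Set.mem_setOf_eq]
  constructor
  · intro h
    have key : ∀ s, Relation.TransGen (DirectSuper sce') ggnm s →
        Relation.TransGen (DirectSuper sce) ggnm s ∧ IsGround s ∧ WFT sce s := by
      intro s h
      induction h with
      | single hstep =>
        obtain ⟨h1, h2, h3⟩ :=
          directSuper_step sce sce' hext hwfn htv ggnm _ hgr hwf hstep
        exact ⟨Relation.TransGen.single h1, h2, h3⟩
      | tail _ hstep ih =>
        obtain ⟨ih1, ih2, ih3⟩ := ih
        obtain ⟨h1, h2, h3⟩ :=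
          directSuper_step sce sce' hext hwfn htv _ _ ih2 ih3 hstep
        exact ⟨Relation.TransGen.tail ih1 h1, h2, h3⟩
    exact (key s h).1
  · intro h
    refine Relation.TransGen.mono ?_ _ _ h
    rintro a b ⟨nm, args, sc, rfl, hsc, t, ht, rfl⟩
    exact ⟨nm, args, sc, rfl, hext _ _ hsc, t, ht, rfl⟩
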